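/- For every constant C with 2/(1+e) < C < 2e/(1+e), the open disc {w ∈ ℂ : |w - C| < (e-1)/(e+1) - |C - 1|} is contained in the region {w ∈ ℂ : w ≠ 0, w ≠ 2, and |log(w/(2 - w))| < 1}, where log is the principal branch. -/

import Mathlib

open Complex Real

lemma aux_log_bound {u : ℂ} (h1 : ‖u‖ < 1) :
    ‖Complex.log (1 + u) - Complex.log (1 - u)‖
      ≤ Real.log (1 + ‖u‖) - Real.log (1 - ‖u‖) := by
  set s : ℝ := ‖u‖ with hsdef
  have hs0 : 0 ≤ s := norm_nonneg u
  have hsC : ‖(s : ℂ)‖ < 1 := by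
    rwa [Complex.norm_real, Real.norm_eq_abs, _root_.abs_of_nonneg hs0]
  have hf : HasSum (fun n : ℕ ↦ (-1) ^ (n + 1) * u ^ n / n + u ^ n / n)
      (Complex.log (1 + u) - Complex.log (1 - u)) := by
    have := (Complex.hasSum_taylorSeries_log h1).add
      (Complex.hasSum_taylorSeries_neg_log h1)
    simpa [sub_eq_add_neg] using this
  have hgC : HasSum (fun n : ℕ ↦ (-1) ^ (n + 1) * (s : ℂ) ^ n / n + (s : ℂ) ^ n / n)
      (Complex.log (1 + (s : ℂ)) - Complex.log (1 - (s : ℂ))) := by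
    have := (Complex.hasSum_taylorSeries_log hsC).add
      (Complex.hasSum_taylorSeries_neg_log hsC)
    simpa [sub_eq_add_neg] using this
  set g : ℕ → ℝ := fun n ↦ (-1) ^ (n + 1) * s ^ n / n + s ^ n / n with hgdef
  have hg : HasSum g (Real.log (1 + s) - Real.log (1 - s)) := by
    rw [← Complex.hasSum_ofReal]
    have heq : (fun n : ℕ ↦ ((g n : ℂ)))
        = fun n : ℕ ↦ (-1) ^ (n + 1) * (s : ℂ) ^ n / n + (s : ℂ) ^ n / n := by
      funext n; simp [hgdef]
    rw [heq]
    have h1s : (0:ℝ) ≤ 1 + s := by linarith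
    have h2s : (0:ℝ) ≤ 1 - s := by
      rw [hsdef]; linarith [h1]
    have e1 : ((Real.log (1 + s) : ℂ)) = Complex.log (1 + (s : ℂ)) := by
      rw [Complex.ofReal_log h1s]; push_cast; ring_nf
    have e2 : ((Real.log (1 - s) : ℂ)) = Complex.log (1 - (s : ℂ)) := by
      rw [Complex.ofReal_log h2s]; push_cast; ring_nf
    rw [Complex.ofReal_sub, e1, e2]
    exact hgC
  have hle : ∀ n : ℕ, ‖(-1 : ℂ) ^ (n + 1) * u ^ n / n + u ^ n / n‖ ≤ g n := by
    intro n
    rcases Nat.even_or_odd n with he | ho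
    · have h1' : ((-1 : ℂ)) ^ (n + 1) = -1 := by
        rw [pow_succ, he.neg_one_pow]; ring
      have h2' : ((-1 : ℝ)) ^ (n + 1) = -1 := by
        rw [pow_succ, he.neg_one_pow]; ring
      simp [hgdef, h1', h2', neg_mul, neg_div]
    · have h1' : ((-1 : ℂ)) ^ (n + 1) = 1 := by
        rw [pow_succ, ho.neg_one_pow]; ring
      have h2' : ((-1 : ℝ)) ^ (n + 1) = 1 := by
        rw [pow_succ, ho.neg_one_pow]; ring
      rw [h1']
      simp only [hgdef, h2', one_mul]
      have : ‖u ^ n / (n:ℂ) + u ^ n / (n:ℂ)‖ ≤ ‖u ^ n / (n:ℂ)‖ + ‖u ^ n / (n:ℂ)‖ :=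
        norm_add_le _ _
      have hn : ‖u ^ n / (n:ℂ)‖ = s ^ n / n := by
        simp [norm_div, norm_pow, hsdef]
      rw [hn] at this
      linarith
  have hfs : Summable fun n : ℕ ↦ ‖(-1 : ℂ) ^ (n + 1) * u ^ n / n + u ^ n / n‖ :=
    Summable.of_nonneg_of_le (fun n ↦ norm_nonneg _) hle hg.summable
  calc ‖Complex.log (1 + u) - Complex.log (1 - u)‖
      = ‖∑' n : ℕ, ((-1 : ℂ) ^ (n + 1) * u ^ n / n + u ^ n / n)‖ := by rw [hf.tsum_eq]
    _ ≤ ∑' n : ℕ, ‖(-1 : ℂ) ^ (n + 1) * u ^ n / n + u ^ n / n‖ :=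
        norm_tsum_le_tsum_norm hfs
    _ ≤ ∑' n : ℕ, g n := Summable.tsum_le_tsum hle hfs hg.summable
    _ = Real.log (1 + s) - Real.log (1 - s) := hg.tsum_eq

theorem stmt_10 (C : ℝ) (h1 : 2 / (1 + Real.exp 1) < C)
    (h2 : C < 2 * Real.exp 1 / (1 + Real.exp 1)) :
    ∀ w : ℂ,
      ‖w - (C:ℂ)‖ < (Real.exp 1 - 1) / (Real.exp 1 + 1) - |C - 1| →
      w ≠ 0 ∧ w ≠ 2 ∧ ‖Complex.log (w / (2 - w))‖ < 1 := by
  intro w hw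
  have he : (1:ℝ) < Real.exp 1 := by
    have := Real.exp_one_gt_d9; linarith
  set ρ : ℝ := (Real.exp 1 - 1) / (Real.exp 1 + 1) with hρdef
  have heρ : (0:ℝ) < Real.exp 1 + 1 := by linarith
  have hρ1 : ρ < 1 := by
    rw [hρdef, div_lt_one heρ]; linarith
  -- |w - 1| < ρ
  have habsC : ‖(C:ℂ) - 1‖ = |C - 1| := by
    rw [show ((C:ℂ) - 1) = ((C - 1 : ℝ) : ℂ) by push_cast; ring, Complex.norm_real, Real.norm_eq_abs]
  have hu : ‖w - 1‖ < ρ := by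
    have htri : ‖w - 1‖ ≤ ‖w - (C:ℂ)‖ + ‖(C:ℂ) - 1‖ := by
      simpa using norm_sub_le_norm_sub_add_norm_sub w (C:ℂ) 1
    rw [habsC] at htri
    linarith
  set u : ℂ := w - 1 with hudef
  have hun : ‖u‖ < ρ := hu
  have hu1 : ‖u‖ < 1 := lt_trans hun hρ1
  have hw0 : w ≠ 0 := by
    intro h
    rw [hudef, h] at hu1
    simp at hu1
  have hw2 : w ≠ 2 := by
    intro h
    rw [hudef, h] at hu1
    norm_num at hu1
  refine ⟨hw0, hw2, ?_⟩
  have hw1u : w = 1 + u := by rw [hudef]; ring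
  have h2w : (2:ℂ) - w = 1 - u := by rw [hudef]; ring
  have h1u0 : (1:ℂ) + u ≠ 0 := by rw [← hw1u]; exact hw0
  have h1mu0 : (1:ℂ) - u ≠ 0 := by
    rw [← h2w]
    intro h
    apply hw2
    linear_combination -h
  -- real parts positive
  have hre1 : 0 < ((1:ℂ) + u).re := by
    have := Complex.abs_re_le_norm u
    simp only [Complex.add_re, Complex.one_re]
    have : |u.re| < 1 := lt_of_le_of_lt this hu1
    cases' abs_lt.mp this with hl hr
    linarith
  have hre2 : 0 < ((1:ℂ) - u).re := by
    have := Complex.abs_re_le_norm u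
    simp only [Complex.sub_re, Complex.one_re]
    have : |u.re| < 1 := lt_of_le_of_lt this hu1
    cases' abs_lt.mp this with hl hr
    linarith
  have harg1 : |Complex.arg (1 + u)| < Real.pi / 2 :=
    Complex.abs_arg_lt_pi_div_two_iff.mpr (Or.inl hre1)
  have harg2 : |Complex.arg (1 - u)| < Real.pi / 2 :=
    Complex.abs_arg_lt_pi_div_two_iff.mpr (Or.inl hre2)
  have hargne : Complex.arg (1 - u) ≠ Real.pi := by
    intro h
    rw [h] at harg2
    have := Real.pi_pos
    rw [abs_of_pos this] at harg2
    linarith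
  -- log of quotient
  have hlogdiv : Complex.log (w / (2 - w)) = Complex.log (1 + u) - Complex.log (1 - u) := by
    rw [h2w, hw1u, div_eq_mul_inv,
      Complex.log_mul h1u0 (inv_ne_zero h1mu0), Complex.log_inv _ hargne]
    · ring
    rw [Set.mem_Ioc]
    constructor
    · have habs : |Complex.arg (1 + u) + Complex.arg ((1 - u)⁻¹)| < Real.pi := by
        calc |Complex.arg (1 + u) + Complex.arg ((1 - u)⁻¹)|
            ≤ |Complex.arg (1 + u)| + |Complex.arg ((1 - u)⁻¹)| := abs_add_le _ _
          _ = |Complex.arg (1 + u)| + |Complex.arg (1 - u)| := by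
              rw [Complex.abs_arg_inv]
          _ < Real.pi / 2 + Real.pi / 2 := by linarith
          _ = Real.pi := by ring
      cases' abs_lt.mp habs with hl hr
      exact hl
    · have habs : |Complex.arg (1 + u) + Complex.arg ((1 - u)⁻¹)| < Real.pi := by
        calc |Complex.arg (1 + u) + Complex.arg ((1 - u)⁻¹)|
            ≤ |Complex.arg (1 + u)| + |Complex.arg ((1 - u)⁻¹)| := abs_add_le _ _
          _ = |Complex.arg (1 + u)| + |Complex.arg (1 - u)| := by
              rw [Complex.abs_arg_inv]
          _ < Real.pi / 2 + Real.pi / 2 := by linarith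
          _ = Real.pi := by ring
      cases' abs_lt.mp habs with hl hr
      exact le_of_lt hr
  -- main bound
  have hbound : ‖Complex.log (1 + u) - Complex.log (1 - u)‖
      ≤ Real.log (1 + ‖u‖) - Real.log (1 - ‖u‖) := aux_log_bound hu1
  have hs0 : (0:ℝ) ≤ ‖u‖ := norm_nonneg u
  have h1s : (0:ℝ) < 1 + ‖u‖ := by linarith
  have h2s : (0:ℝ) < 1 - ‖u‖ := by linarith
  have hfin : Real.log (1 + ‖u‖) - Real.log (1 - ‖u‖) < 1 := by
    rw [← Real.log_div h1s.ne' h2s.ne']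
    have hlt : (1 + ‖u‖) / (1 - ‖u‖) < Real.exp 1 := by
      rw [div_lt_iff₀ h2s]
      have : ‖u‖ * (1 + Real.exp 1) < Real.exp 1 - 1 := by
        rw [hρdef, lt_div_iff₀ heρ] at hun
        nlinarith
      nlinarith
    calc Real.log ((1 + ‖u‖) / (1 - ‖u‖)) < Real.log (Real.exp 1) :=
          Real.log_lt_log (div_pos h1s h2s) hlt
      _ = 1 := Real.log_exp 1
  calc ‖Complex.log (w / (2 - w))‖
      = ‖Complex.log (1 + u) - Complex.log (1 - u)‖ := by
        rw [hlogdiv]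
    _ ≤ Real.log (1 + ‖u‖) - Real.log (1 - ‖u‖) := hbound
    _ < 1 := hfin
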